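/- Every ℝ-algebra automorphism of the quaternions is induced by a rotation of the imaginary part: for every φ : ℍ ≃ₐ[ℝ] ℍ there exists a special orthogonal matrix R : Matrix (Fin 3) (Fin 3) ℝ (Rᵀ * R = 1 and det R = 1) such that for all v ∈ ℍ, φ v = ⟨v.re, u 0, u 1, u 2⟩ where u = R.mulVec (imVec v). In other words, the automorphism group of ℍ(ℝ) as an ℝ-algebra is isomorphic to SO₃(ℝ) acting on imaginary parts. -/

import Mathlib

open Matrix

/-- The imaginary part of a quaternion as a vector in `Fin 3 → ℝ`. -/
def imVec (q : Quaternion ℝ) : Fin 3 → ℝ := ![q.imI, q.imJ, q.imK]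

/-- Every ℝ-algebra automorphism of the quaternions is induced by a rotation of
the imaginary part: it is given by a special orthogonal matrix acting on the
imaginary parts while preserving the real part. -/
theorem algebraAut_quaternion_eq_rotation (φ : Quaternion ℝ ≃ₐ[ℝ] Quaternion ℝ) :
    ∃ R : Matrix (Fin 3) (Fin 3) ℝ, Rᵀ * R = 1 ∧ R.det = 1 ∧
      ∀ v : Quaternion ℝ,
        φ v = ⟨v.re, R.mulVec (imVec v) 0, R.mulVec (imVec v) 1,
                R.mulVec (imVec v) 2⟩ := by
  set p := φ (⟨0,1,0,0⟩ : Quaternion ℝ) with hp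
  set q := φ (⟨0,0,1,0⟩ : Quaternion ℝ) with hq
  set r := φ (⟨0,0,0,1⟩ : Quaternion ℝ) with hr
  have key : ∀ x : Quaternion ℝ, x * x = -1 → x.re = 0 ∧
      x.imI^2 + x.imJ^2 + x.imK^2 = 1 := by
    intro x hx
    have h1 : (x*x).re = (-1 : Quaternion ℝ).re := by rw [hx]
    have h2 : (x*x).imI = (-1 : Quaternion ℝ).imI := by rw [hx]
    have h3 : (x*x).imJ = (-1 : Quaternion ℝ).imJ := by rw [hx]
    have h4 : (x*x).imK = (-1 : Quaternion ℝ).imK := by rw [hx]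
    simp [Quaternion.re_mul, Quaternion.imI_mul, Quaternion.imJ_mul,
      Quaternion.imK_mul, Quaternion.re_one, Quaternion.imI_one, Quaternion.imJ_one, Quaternion.imK_one] at h1 h2 h3 h4
    have hre : x.re = 0 := by
      nlinarith [sq_nonneg x.re, sq_nonneg x.imI, sq_nonneg x.imJ, sq_nonneg x.imK]
    exact ⟨hre, by nlinarith [h1, hre]⟩
  have hii : (⟨0,1,0,0⟩ : Quaternion ℝ) * ⟨0,1,0,0⟩ = -1 := by
    apply Quaternion.ext <;>
      simp [Quaternion.re_mul, Quaternion.imI_mul, Quaternion.imJ_mul, Quaternion.imK_mul]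
  have hjj : (⟨0,0,1,0⟩ : Quaternion ℝ) * ⟨0,0,1,0⟩ = -1 := by
    apply Quaternion.ext <;>
      simp [Quaternion.re_mul, Quaternion.imI_mul, Quaternion.imJ_mul, Quaternion.imK_mul]
  have hkk : (⟨0,0,0,1⟩ : Quaternion ℝ) * ⟨0,0,0,1⟩ = -1 := by
    apply Quaternion.ext <;>
      simp [Quaternion.re_mul, Quaternion.imI_mul, Quaternion.imJ_mul, Quaternion.imK_mul]
  have hij : (⟨0,1,0,0⟩ : Quaternion ℝ) * ⟨0,0,1,0⟩ = ⟨0,0,0,1⟩ := by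
    apply Quaternion.ext <;>
      simp [Quaternion.re_mul, Quaternion.imI_mul, Quaternion.imJ_mul, Quaternion.imK_mul]
  have hpp : p * p = -1 := by erw [hp, ← _root_.map_mul, hii, map_neg, map_one]
  have hqq : q * q = -1 := by erw [hq, ← _root_.map_mul, hjj, map_neg, map_one]
  have hrr : r * r = -1 := by erw [hr, ← _root_.map_mul, hkk, map_neg, map_one]
  have hpq : p * q = r := by erw [hp, hq, hr, ← _root_.map_mul, hij]
  obtain ⟨hpre, hpn⟩ := key p hpp
  obtain ⟨hqre, hqn⟩ := key q hqq
  obtain ⟨hr_re, hrn⟩ := key r hrr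
  have hpqdot : p.imI * q.imI + p.imJ * q.imJ + p.imK * q.imK = 0 := by
    have h := hr_re
    rw [← hpq, Quaternion.re_mul, hpre, hqre] at h
    linarith
  have hrI : r.imI = p.imJ * q.imK - p.imK * q.imJ := by
    rw [← hpq, Quaternion.imI_mul, hpre, hqre]; ring
  have hrJ : r.imJ = p.imK * q.imI - p.imI * q.imK := by
    rw [← hpq, Quaternion.imJ_mul, hpre, hqre]; ring
  have hrK : r.imK = p.imI * q.imJ - p.imJ * q.imI := by
    rw [← hpq, Quaternion.imK_mul, hpre, hqre]; ring
  have hpr : p.imI * r.imI + p.imJ * r.imJ + p.imK * r.imK = 0 := by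
    rw [hrI, hrJ, hrK]; ring
  have hqr : q.imI * r.imI + q.imJ * r.imJ + q.imK * r.imK = 0 := by
    rw [hrI, hrJ, hrK]; ring
  refine ⟨!![p.imI, q.imI, r.imI; p.imJ, q.imJ, r.imJ; p.imK, q.imK, r.imK],
    ?_, ?_, ?_⟩
  · ext m n
    fin_cases m <;> fin_cases n <;>
      simp [Matrix.mul_apply, Fin.sum_univ_three, Matrix.one_apply, Matrix.transpose,
        Matrix.vecHead, Matrix.vecTail] <;>
      linarith [hpn, hqn, hrn, hpqdot, hpr, hqr]
  · rw [Matrix.det_fin_three]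
    simp only [Matrix.of_apply, Matrix.cons_val', Matrix.cons_val_zero, Matrix.cons_val_one,
      Matrix.head_cons, Matrix.empty_val', Matrix.cons_val_fin_one, Matrix.head_fin_const,
      Matrix.cons_val_two, Matrix.tail_cons]
    rw [hrI, hrJ, hrK]
    linear_combination (q.imI^2 + q.imJ^2 + q.imK^2) * hpn + hqn
      - (p.imI*q.imI + p.imJ*q.imJ + p.imK*q.imK) * hpqdot
  · intro v
    have hv : v = (algebraMap ℝ (Quaternion ℝ) v.re) + v.imI • ⟨0,1,0,0⟩
        + v.imJ • ⟨0,0,1,0⟩ + v.imK • ⟨0,0,0,1⟩ := by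
      apply Quaternion.ext
      · simp; erw [Quaternion.re_smul, Quaternion.re_smul, Quaternion.re_smul]; simp
      · simp; erw [Quaternion.imI_smul, Quaternion.imI_smul, Quaternion.imI_smul]; simp
      · simp; erw [Quaternion.imJ_smul, Quaternion.imJ_smul, Quaternion.imJ_smul]; simp
      · simp; erw [Quaternion.imK_smul, Quaternion.imK_smul, Quaternion.imK_smul]; simp
    conv_lhs => rw [hv]
    erw [map_add, map_add, map_add, _root_.map_smul, _root_.map_smul, _root_.map_smul, φ.commutes,
      ← hp, ← hq, ← hr]
    apply Quaternion.ext <;>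
      simp [Matrix.mulVec, dotProduct, Fin.sum_univ_three, imVec,
        Quaternion.algebraMap_def, hpre, hqre, hr_re] <;> ring
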